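/- The linearization of the operator z ↦ -z'' + 4z - (3/2)z² about the explicit solution z₀(t) = 16 e^{2(t-t₀)}/(1+e^{2(t-t₀)})² is L = -d²/dt² + 4 - 3z₀(t), and the function φ(t) = e^{2t}(e^{4t} + e^{4t₀} - 3e^{2(t+t₀)})/(e^{2t}+e^{2t₀})³ satisfies Lφ = 0; moreover φ is not identically zero. (Equivalently, with the paper's normalization L = -d²/dt² + 1 - 48 e^{2(t+t₀)}/(e^{2t}+e^{2t₀})², the kernel element is ψ(t) = e^t(e^{4t}+e^{4t₀}-3e^{2(t+t₀)})/(e^{2t}+e^{2t₀})³.) -/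

import Mathlib

open Real

private lemma e2 (s : ℝ) : exp (2*s) = exp s ^ 2 := by
  rw [two_mul, exp_add, sq]

private lemma e4 (s : ℝ) : exp (4*s) = exp s ^ 4 := by
  rw [show (4:ℝ)*s = s+(s+(s+s)) by ring, exp_add, exp_add, exp_add]; ring

private lemma emix (t t₀ : ℝ) : exp (2*(t+t₀)) = exp t ^ 2 * exp t₀ ^ 2 := by
  rw [mul_add, exp_add, e2, e2]

noncomputable def P9 (t₀ t : ℝ) : ℝ :=
  (-(exp t)^7 + 14*exp (2*t₀)*(exp t)^5 - 14*(exp (2*t₀))^2*(exp t)^3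
    + (exp (2*t₀))^3*exp t) / (exp (2*t) + exp (2*t₀))^4

private lemma h2exp (t : ℝ) : HasDerivAt (fun t : ℝ => exp (2*t)) (exp (2*t) * 2) t := by
  exact (((hasDerivAt_id t).const_mul 2).exp).congr_deriv (by simp)

private lemma hDne (t₀ t : ℝ) : (exp (2*t) + exp (2*t₀)) ≠ 0 := by positivity

private lemma L1 (t₀ t : ℝ) :
    HasDerivAt (fun t : ℝ =>
      exp t * (exp (4*t) + exp (4*t₀) - 3 * exp (2*(t + t₀))) / (exp (2*t) + exp (2*t₀))^3)
      (P9 t₀ t) t := by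
  have h4 : HasDerivAt (fun t : ℝ => exp (4*t)) (exp (4*t) * 4) t := by
    exact (((hasDerivAt_id t).const_mul 4).exp).congr_deriv (by simp)
  have hm : HasDerivAt (fun t : ℝ => exp (2*(t + t₀))) (exp (2*(t+t₀)) * 2) t := by
    have : HasDerivAt (fun t : ℝ => 2*(t + t₀)) 2 t := by
      simpa using ((hasDerivAt_id t).add_const t₀).const_mul 2
    exact this.exp.congr_deriv (by simp)
  have hN : HasDerivAt (fun t : ℝ => exp t * (exp (4*t) + exp (4*t₀) - 3 * exp (2*(t + t₀))))
      (exp t * (exp (4*t) + exp (4*t₀) - 3 * exp (2*(t + t₀)))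
        + exp t * (exp (4*t) * 4 - 3 * (exp (2*(t+t₀)) * 2))) t := by
    exact (Real.hasDerivAt_exp t).mul ((h4.add_const _).sub (hm.const_mul 3))
  have hD : HasDerivAt (fun t : ℝ => (exp (2*t) + exp (2*t₀))^3)
      ((3:ℕ) * (exp (2*t) + exp (2*t₀))^2 * (exp (2*t) * 2)) t := by
    simpa using ((h2exp t).add_const (exp (2*t₀))).fun_pow 3
  have := hN.div hD (pow_ne_zero 3 (hDne t₀ t))
  refine this.congr_deriv ?_
  have hx := (exp_pos t).ne'
  have hy := (exp_pos t₀).ne'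
  rw [P9, e2 t, e2 t₀, e4 t, e4 t₀, emix]
  have hD' : (exp t ^ 2 + exp t₀ ^ 2) ≠ 0 := by positivity
  field_simp
  ring

private lemma L2 (t₀ t : ℝ) :
    HasDerivAt (P9 t₀)
      (((exp t)^9 - 49*exp (2*t₀)*(exp t)^7 + 140*(exp (2*t₀))^2*(exp t)^5
        - 49*(exp (2*t₀))^3*(exp t)^3 + (exp (2*t₀))^4*exp t)
        / (exp (2*t) + exp (2*t₀))^5) t := by
  have he := Real.hasDerivAt_exp t
  have hN : HasDerivAt (fun t : ℝ => -(exp t)^7 + 14*exp (2*t₀)*(exp t)^5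
      - 14*(exp (2*t₀))^2*(exp t)^3 + (exp (2*t₀))^3*exp t)
      (-((7:ℕ)*(exp t)^6*exp t) + 14*exp (2*t₀)*((5:ℕ)*(exp t)^4*exp t)
        - 14*(exp (2*t₀))^2*((3:ℕ)*(exp t)^2*exp t) + (exp (2*t₀))^3*exp t) t := by
    exact (((he.pow 7).neg.add ((he.pow 5).const_mul _)).sub
      ((he.pow 3).const_mul _)).add (he.const_mul _)
  have hD : HasDerivAt (fun t : ℝ => (exp (2*t) + exp (2*t₀))^4)
      ((4:ℕ) * (exp (2*t) + exp (2*t₀))^3 * (exp (2*t) * 2)) t := by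
    simpa using ((h2exp t).add_const (exp (2*t₀))).fun_pow 4
  have := hN.div hD (pow_ne_zero 4 (hDne t₀ t))
  refine (this.congr_deriv ?_)
  have hx := (exp_pos t).ne'
  have hy := (exp_pos t₀).ne'
  rw [e2 t, e2 t₀]
  have hD' : (exp t ^ 2 + exp t₀ ^ 2) ≠ 0 := by positivity
  field_simp
  ring

/-- The function `ψ(t) = e^t (e^{4t} + e^{4t₀} - 3 e^{2(t+t₀)}) / (e^{2t} + e^{2t₀})³`
lies in the kernel of the linearized operator
`L = -d²/dt² + 1 - 48 e^{2(t+t₀)}/(e^{2t}+e^{2t₀})²`, and `ψ` is not identically zero. -/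
theorem stmt9 (t₀ : ℝ) (ψ : ℝ → ℝ)
    (hψ : ψ = fun t : ℝ =>
      exp t * (exp (4*t) + exp (4*t₀) - 3 * exp (2*(t + t₀))) / (exp (2*t) + exp (2*t₀))^3) :
    (∀ t : ℝ,
      -(deriv (deriv ψ) t) + ψ t
        - (48 * exp (2*(t + t₀)) / (exp (2*t) + exp (2*t₀))^2) * ψ t = 0) ∧
    (∃ t : ℝ, ψ t ≠ 0) := by
  have hd1 : deriv ψ = P9 t₀ := by
    funext t
    rw [hψ]
    exact (L1 t₀ t).deriv
  constructor
  · intro t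
    have hd2 : deriv (deriv ψ) t =
        ((exp t)^9 - 49*exp (2*t₀)*(exp t)^7 + 140*(exp (2*t₀))^2*(exp t)^5
          - 49*(exp (2*t₀))^3*(exp t)^3 + (exp (2*t₀))^4*exp t)
          / (exp (2*t) + exp (2*t₀))^5 := by
      rw [hd1]; exact (L2 t₀ t).deriv
    rw [hd2, hψ]
    have hx := (exp_pos t).ne'
    have hy := (exp_pos t₀).ne'
    simp only [e2 t, e2 t₀, e4 t, e4 t₀, emix]
    have hD' : (exp t ^ 2 + exp t₀ ^ 2) ≠ 0 := by positivity
    field_simp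
    ring
  · refine ⟨t₀ + 1, ?_⟩
    rw [hψ]
    simp only [ne_eq, div_eq_zero_iff]
    push_neg
    constructor
    · intro h
      have h2 : exp (4*(t₀+1)) + exp (4*t₀) - 3 * exp (2*((t₀+1) + t₀)) = 0 := by
        rcases mul_eq_zero.mp h with h | h
        · exact absurd h (exp_pos _).ne'
        · exact h
      -- show the quadratic-in-e² expression is nonzero
      have : exp ((t₀+1)*2) ^ 2 + exp (t₀*2) ^2 - 3 * (exp ((t₀+1)*2) * exp (t₀*2)) = 0 := by
        have a1 : exp (4*(t₀+1)) = exp ((t₀+1)*2) ^ 2 := by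
          rw [← exp_nat_mul]; ring_nf
        have a2 : exp (4*t₀) = exp (t₀*2) ^ 2 := by
          rw [← exp_nat_mul]; ring_nf
        have a3 : exp (2*((t₀+1)+t₀)) = exp ((t₀+1)*2) * exp (t₀*2) := by
          rw [← exp_add]; ring_nf
        rw [a1, a2, a3] at h2; linarith
      set a := exp ((t₀+1)*2) with ha
      set b := exp (t₀*2) with hb
      have hab : a = exp 2 * b := by rw [ha, hb, ← exp_add]; ring_nf
      rw [hab] at this
      have hbpos : 0 < b := exp_pos _
      have hb2 : 0 < b ^ 2 := by positivity
      have h7 : (3:ℝ) < exp 2 := by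
        have he2 : exp 2 = exp 1 * exp 1 := by
          rw [show (2:ℝ) = 1 + 1 by norm_num, exp_add]
        nlinarith [Real.exp_one_gt_d9]
      nlinarith [this, hb2, h7]
    · positivity
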